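/- Let V be a finite set, s a positive integer, Δ a natural number, and let E be a finite family of subsets of V such that every f ∈ E satisfies |f| ≥ s, and every f ∈ E intersects at most Δ other members of E. If e·2^{1-s}·(Δ+1) < 1, then there exists a coloring c : V → Bool such that no f ∈ E is monochromatic (i.e., every edge contains elements of both colors). -/

import Mathlib

open Finset

namespace LLLAux

variable {V : Type*} [Fintype V] [DecidableEq V]

/-- `f` is monochromatic under `c`. -/
def monoP (f : Finset V) (c : V → Bool) : Prop :=
  (∀ x ∈ f, c x = true) ∨ (∀ x ∈ f, c x = false)

instance (f : Finset V) (c : V → Bool) : Decidable (monoP f c) :=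
  inferInstanceAs (Decidable (_ ∨ _))

lemma monoP_congr {g : Finset V} {c c' : V → Bool} (h : ∀ x ∈ g, c x = c' x) :
    monoP g c ↔ monoP g c' := by
  unfold monoP
  constructor
  · rintro (H | H)
    · exact Or.inl fun x hx => by rw [← h x hx]; exact H x hx
    · exact Or.inr fun x hx => by rw [← h x hx]; exact H x hx
  · rintro (H | H)
    · exact Or.inl fun x hx => by rw [h x hx]; exact H x hx
    · exact Or.inr fun x hx => by rw [h x hx]; exact H x hx

/-- Colorings avoiding all edges in `S`. -/
def BB (S : Finset (Finset V)) : Finset (V → Bool) :=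
  univ.filter fun c => ∀ g ∈ S, ¬ monoP g c

/-- Colorings making `f` monochromatic while avoiding all edges in `S`. -/
def AB (f : Finset V) (S : Finset (Finset V)) : Finset (V → Bool) :=
  univ.filter fun c => monoP f c ∧ ∀ g ∈ S, ¬ monoP g c

lemma AB_eq (f : Finset V) (S : Finset (Finset V)) :
    AB f S = (BB S).filter fun c => monoP f c := by
  ext c; simp [AB, BB, and_comm]

lemma BB_insert (f : Finset V) (S : Finset (Finset V)) :
    BB (insert f S) = (BB S).filter fun c => ¬ monoP f c := by
  ext c
  simp only [BB, mem_filter, mem_univ, true_and, mem_insert]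
  constructor
  · intro h; exact ⟨fun g hg => h g (Or.inr hg), h f (Or.inl rfl)⟩
  · rintro ⟨h1, h2⟩ g (rfl | hg)
    · exact h2
    · exact h1 g hg

lemma card_split (f : Finset V) (S : Finset (Finset V)) :
    (AB f S).card + (BB (insert f S)).card = (BB S).card := by
  rw [AB_eq, BB_insert]
  exact card_filter_add_card_filter_not _

lemma AB_anti (f : Finset V) {S2 S : Finset (Finset V)} (h : S2 ⊆ S) :
    AB f S ⊆ AB f S2 := by
  apply monotone_filter_right
  rintro c - ⟨h1, h2⟩
  exact ⟨h1, fun g hg => h2 g (h hg)⟩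

/-- Splitting a coloring into its values on `f` and off `f`. -/
def splitEquiv (f : Finset V) :
    (V → Bool) ≃ ({x // x ∈ f} → Bool) × ({x : V // x ∉ f} → Bool) where
  toFun c := (fun x => c x.1, fun x => c x.1)
  invFun p v := if h : v ∈ f then p.1 ⟨v, h⟩ else p.2 ⟨v, h⟩
  left_inv c := funext fun v => by by_cases h : v ∈ f <;> simp [h]
  right_inv p := by
    ext x
    · simp [x.2]
    · simp [x.2]

/-- The key "independence" counting identity: if all edges of `S` are disjoint
from `f`, then the colorings making `f` monochromatic while avoiding `S` make
up exactly a `2/2^|f|` fraction of the colorings avoiding `S`. -/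
lemma card_AB_of_disjoint (f : Finset V) (hf : f.Nonempty) (S : Finset (Finset V))
    (hdisj : ∀ g ∈ S, g ∩ f = ∅) :
    (AB f S).card * 2 ^ f.card = 2 * (BB S).card := by
  classical
  set α := {x // x ∈ f}
  set β := {x : V // x ∉ f}
  set e := splitEquiv f with he
  set q1 : (α → Bool) → Prop := fun a => (∀ x, a x = true) ∨ (∀ x, a x = false) with hq1
  set ext2 : (β → Bool) → (V → Bool) := fun b v => if h : v ∈ f then true else b ⟨v, h⟩ with hext2
  set q2 : (β → Bool) → Prop := fun b => ∀ g ∈ S, ¬ monoP g (ext2 b) with hq2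
  have hnotin : ∀ g ∈ S, ∀ x ∈ g, x ∉ f := by
    intro g hg x hx hxf
    have : x ∈ g ∩ f := mem_inter.mpr ⟨hx, hxf⟩
    rw [hdisj g hg] at this
    exact notMem_empty x this
  -- how predicates transform under e
  have hmono : ∀ c : V → Bool, monoP f c ↔ q1 (e c).1 := by
    intro c
    simp only [he, splitEquiv, Equiv.coe_fn_mk, hq1, monoP]
    constructor
    · rintro (H | H)
      · exact Or.inl fun x => H x.1 x.2
      · exact Or.inr fun x => H x.1 x.2
    · rintro (H | H)
      · exact Or.inl fun x hx => H ⟨x, hx⟩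
      · exact Or.inr fun x hx => H ⟨x, hx⟩
  have havoid : ∀ c : V → Bool, (∀ g ∈ S, ¬ monoP g c) ↔ q2 (e c).2 := by
    intro c
    simp only [he, splitEquiv, Equiv.coe_fn_mk, hq2]
    apply forall₂_congr
    intro g hg
    have : monoP g c ↔ monoP g (ext2 fun x : β => c x.1) := by
      apply monoP_congr
      intro x hx
      have hxf : x ∉ f := hnotin g hg x hx
      simp [hext2, hxf]
    rw [this]
  -- card of AB via product
  have hABcard : (AB f S).card
      = ((univ : Finset (α → Bool)).filter q1).card * ((univ : Finset (β → Bool)).filter q2).card := by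
    have h1 : (AB f S).card
        = ((univ : Finset ((α → Bool) × (β → Bool))).filter fun q => q1 q.1 ∧ q2 q.2).card := by
      apply Finset.card_equiv e
      intro c
      simp only [AB, mem_filter, mem_univ, true_and]
      rw [hmono c, havoid c]
    rw [h1, ← Finset.univ_product_univ, Finset.filter_product, Finset.card_product]
  have hBBcard : (BB S).card
      = 2 ^ f.card * ((univ : Finset (β → Bool)).filter q2).card := by
    set q1T : (α → Bool) → Prop := fun _ => True with hq1T
    have h1 : (BB S).card
        = ((univ : Finset ((α → Bool) × (β → Bool))).filter fun q => q1T q.1 ∧ q2 q.2).card := by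
      apply Finset.card_equiv e
      intro c
      simp only [BB, mem_filter, mem_univ, true_and, hq1T, true_and]
      rw [havoid c]
    rw [h1, ← Finset.univ_product_univ, Finset.filter_product, Finset.card_product]
    congr 1
    rw [show (univ : Finset (α → Bool)).filter q1T = univ from filter_true_of_mem fun _ _ => trivial]
    rw [Finset.card_univ, Fintype.card_fun, Fintype.card_bool, Fintype.card_coe]
  have hq1card : ((univ : Finset (α → Bool)).filter q1).card = 2 := by
    have : (univ : Finset (α → Bool)).filter q1 = {fun _ => true, fun _ => false} := by
      ext a
      simp only [mem_filter, mem_univ, true_and, mem_insert, mem_singleton, hq1]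
      rw [funext_iff, funext_iff]
    rw [this]
    rw [card_insert_of_notMem, card_singleton]
    obtain ⟨x0, hx0⟩ := hf
    simp only [mem_singleton]
    intro h
    have := congrFun h ⟨x0, hx0⟩
    simp at this
  rw [hABcard, hBBcard, hq1card]
  ring

lemma main_bound (s Δ : ℕ) (E : Finset (Finset V)) (hs : 0 < s)
    (hsize : ∀ f ∈ E, s ≤ f.card)
    (hdeg : ∀ f ∈ E, (E.filter fun g => g ≠ f ∧ (g ∩ f).Nonempty).card ≤ Δ)
    (x : ℝ) (hx0 : 0 ≤ x) (hx1 : x ≤ 1)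
    (hp : (2:ℝ) ^ (1 - (s:ℝ)) ≤ x * (1-x)^Δ) :
    ∀ n (S : Finset (Finset V)), S.card = n → S ⊆ E → ∀ f ∈ E,
      ((AB f S).card : ℝ) ≤ x * ((BB S).card : ℝ) := by
  have h1mx : (0:ℝ) ≤ 1 - x := by linarith
  intro n
  induction n using Nat.strong_induction_on with
  | _ n IH =>
    intro S hcard hSE f hfE
    by_cases hfS : f ∈ S
    · have hempty : AB f S = ∅ := by
        rw [eq_empty_iff_forall_notMem]
        intro c hc
        rw [AB, mem_filter] at hc
        exact hc.2.2 f hfS hc.2.1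
      rw [hempty]
      simp only [card_empty, Nat.cast_zero]
      positivity
    · set S1 := S.filter (fun g => (g ∩ f).Nonempty) with hS1def
      set S2 := S.filter (fun g => ¬ (g ∩ f).Nonempty) with hS2def
      have hunion : S2 ∪ S1 = S := by
        rw [union_comm]
        exact filter_union_filter_not_eq _ S
      have hS1card : S1.card ≤ Δ := by
        refine le_trans (card_le_card ?_) (hdeg f hfE)
        intro g hg
        rw [hS1def, mem_filter] at hg
        rw [mem_filter]
        exact ⟨hSE hg.1, fun he => hfS (he ▸ hg.1), hg.2⟩
      have hS2disj : ∀ g ∈ S2, g ∩ f = ∅ := by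
        intro g hg
        rw [hS2def, mem_filter] at hg
        exact not_nonempty_iff_eq_empty.mp hg.2
      -- peeling off the neighbors of f one at a time
      have peel : ∀ T : Finset (Finset V), T ⊆ S1 →
          (1-x) ^ T.card * ((BB S2).card : ℝ) ≤ ((BB (S2 ∪ T)).card : ℝ) := by
        intro T
        induction T using Finset.induction_on with
        | empty => intro _; simp
        | @insert g T hgT ihT =>
          intro hsub
          have hTsub : T ⊆ S1 := fun a ha => hsub (mem_insert_of_mem ha)
          have hgS1 : g ∈ S1 := hsub (mem_insert_self g T)
          have hgS : g ∈ S := mem_of_mem_filter g hgS1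
          have hgE : g ∈ E := hSE hgS
          have hsubS : S2 ∪ T ⊆ S :=
            union_subset (filter_subset _ _) (hTsub.trans (filter_subset _ _))
          have hgnot : g ∉ S2 ∪ T := by
            rw [mem_union]
            rintro (h | h)
            · rw [hS2def, mem_filter] at h
              rw [hS1def, mem_filter] at hgS1
              exact h.2 hgS1.2
            · exact hgT h
          have hlt : (S2 ∪ T).card < n := by
            calc (S2 ∪ T).card ≤ (S.erase g).card :=
                  card_le_card (subset_erase.mpr ⟨hsubS, hgnot⟩)
              _ < S.card := card_erase_lt_of_mem hgS
              _ = n := hcard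
          have hAB := IH _ hlt (S2 ∪ T) rfl (hsubS.trans hSE) g hgE
          have hsplit : ((AB g (S2 ∪ T)).card : ℝ) + ((BB (insert g (S2 ∪ T))).card : ℝ)
              = ((BB (S2 ∪ T)).card : ℝ) := by
            exact_mod_cast congrArg (Nat.cast (R := ℝ)) (card_split g (S2 ∪ T))
          have h1 : (1 - x) * ((BB (S2 ∪ T)).card : ℝ)
              ≤ ((BB (insert g (S2 ∪ T))).card : ℝ) := by nlinarith
          rw [union_insert, card_insert_of_notMem hgT]
          calc (1-x)^(T.card + 1) * ((BB S2).card:ℝ)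
              = (1-x) * ((1-x)^T.card * ((BB S2).card:ℝ)) := by ring
            _ ≤ (1-x) * ((BB (S2 ∪ T)).card : ℝ) :=
                mul_le_mul_of_nonneg_left (ihT hTsub) h1mx
            _ ≤ _ := h1
      have hfne : f.Nonempty := card_pos.mp (lt_of_lt_of_le hs (hsize f hfE))
      have hkey := card_AB_of_disjoint f hfne S2 hS2disj
      have hBB2nonneg : (0:ℝ) ≤ ((BB S2).card : ℝ) := Nat.cast_nonneg _
      -- card AB f S ≤ card AB f S2
      have hmono : ((AB f S).card : ℝ) ≤ ((AB f S2).card : ℝ) := by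
        exact_mod_cast card_le_card (AB_anti f (filter_subset _ _))
      -- AB f S2 ≤ p * BB S2
      have hABS2 : ((AB f S2).card : ℝ) ≤ (2:ℝ)^(1-(s:ℝ)) * ((BB S2).card : ℝ) := by
        have h2pos : (0:ℝ) < 2 ^ f.card := by positivity
        have hcast : ((AB f S2).card : ℝ) * 2 ^ f.card = 2 * ((BB S2).card : ℝ) := by
          exact_mod_cast congrArg (Nat.cast (R := ℝ)) hkey
        have hfc : (2:ℝ)^(1-(f.card:ℝ)) = 2 / 2 ^ f.card := by
          rw [Real.rpow_sub (by norm_num), Real.rpow_one, Real.rpow_natCast]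
        have hle : (2:ℝ) / 2 ^ f.card ≤ (2:ℝ)^(1-(s:ℝ)) := by
          rw [← hfc]
          apply Real.rpow_le_rpow_of_exponent_le one_le_two
          have : (s:ℝ) ≤ (f.card : ℝ) := Nat.cast_le.mpr (hsize f hfE)
          linarith
        have ha : ((AB f S2).card : ℝ) = 2 / 2 ^ f.card * ((BB S2).card : ℝ) := by
          field_simp
          linarith [hcast]
        rw [ha]
        exact mul_le_mul_of_nonneg_right hle hBB2nonneg
      have hpow : (1-x)^Δ ≤ (1-x)^S1.card := pow_le_pow_of_le_one h1mx (by linarith) hS1card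
      have hpeel := peel S1 Subset.rfl
      calc ((AB f S).card : ℝ) ≤ ((AB f S2).card : ℝ) := hmono
        _ ≤ (2:ℝ)^(1-(s:ℝ)) * ((BB S2).card : ℝ) := hABS2
        _ ≤ x * (1-x)^Δ * ((BB S2).card : ℝ) := mul_le_mul_of_nonneg_right hp hBB2nonneg
        _ ≤ x * (1-x)^S1.card * ((BB S2).card : ℝ) := by
            apply mul_le_mul_of_nonneg_right _ hBB2nonneg
            exact mul_le_mul_of_nonneg_left hpow hx0
        _ = x * ((1-x)^S1.card * ((BB S2).card : ℝ)) := by ring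
        _ ≤ x * ((BB (S2 ∪ S1)).card : ℝ) := mul_le_mul_of_nonneg_left hpeel hx0
        _ = x * ((BB S).card : ℝ) := by rw [hunion]

lemma BB_pos (s Δ : ℕ) (E : Finset (Finset V)) (hs : 0 < s)
    (hsize : ∀ f ∈ E, s ≤ f.card)
    (hdeg : ∀ f ∈ E, (E.filter fun g => g ≠ f ∧ (g ∩ f).Nonempty).card ≤ Δ)
    (x : ℝ) (hx0 : 0 ≤ x) (hx1 : x < 1)
    (hp : (2:ℝ) ^ (1 - (s:ℝ)) ≤ x * (1-x)^Δ) :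
    ∀ S ⊆ E, 0 < (BB (V := V) S).card := by
  intro S
  induction S using Finset.induction_on with
  | empty =>
    intro _
    have : BB (∅ : Finset (Finset V)) = univ := by
      ext c; simp [BB]
    rw [this]
    exact univ_nonempty.card_pos
  | @insert f S hfS ih =>
    intro hsub
    have hfE : f ∈ E := hsub (mem_insert_self f S)
    have hSE : S ⊆ E := fun a ha => hsub (mem_insert_of_mem ha)
    have hBBS := ih hSE
    have hb := main_bound s Δ E hs hsize hdeg x hx0 hx1.le hp S.card S rfl hSE f hfE
    have hsplit : ((AB f S).card : ℝ) + ((BB (insert f S)).card : ℝ) = ((BB S).card : ℝ) := by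
      exact_mod_cast congrArg (Nat.cast (R := ℝ)) (card_split f S)
    have hBBSpos : (0:ℝ) < ((BB S).card : ℝ) := by exact_mod_cast hBBS
    have : (0:ℝ) < ((BB (insert f S)).card : ℝ) := by nlinarith
    exact_mod_cast this

end LLLAux

/-- symmetric Lovász Local Lemma for hypergraph 2-coloring: if
every edge has at least `s` vertices, every edge intersects at most `Δ` other
edges, and `e·2^{1-s}·(Δ+1) < 1`, then there is a 2-coloring with no
monochromatic edge (every edge gets both colors). -/
theorem hypergraph_two_colorable (V : Type*) [Fintype V] [DecidableEq V]
    (s : ℕ) (hs : 0 < s) (Δ : ℕ) (E : Finset (Finset V))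
    (hsize : ∀ f ∈ E, s ≤ f.card)
    (hdeg : ∀ f ∈ E, (E.filter fun g => g ≠ f ∧ (g ∩ f).Nonempty).card ≤ Δ)
    (hLLL : Real.exp 1 * (2 : ℝ) ^ (1 - (s : ℝ)) * ((Δ : ℝ) + 1) < 1) :
    ∃ c : V → Bool, ∀ f ∈ E, (∃ x ∈ f, c x = true) ∧ (∃ x ∈ f, c x = false) := by
  classical
  set D : ℝ := (Δ : ℝ) with hD
  have hD0 : (0:ℝ) ≤ D := Nat.cast_nonneg _
  set x : ℝ := (D + 2)⁻¹ with hxdef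
  have hx0 : 0 ≤ x := by positivity
  have hx1 : x < 1 := by
    rw [hxdef]
    rw [inv_lt_one_iff₀]
    right; linarith
  have h1mx : 1 - x = (D+1)/(D+2) := by
    rw [hxdef]; field_simp; ring
  have hppos : (0:ℝ) < (2:ℝ)^(1-(s:ℝ)) := Real.rpow_pos_of_pos (by norm_num) _
  -- the numeric LLL condition
  have hp : (2:ℝ) ^ (1 - (s:ℝ)) ≤ x * (1-x)^Δ := by
    have key : ((D+2)/(D+1))^(Δ+1) ≤ Real.exp 1 := by
      have h1 : (D+2)/(D+1) ≤ Real.exp ((D+1)⁻¹) := by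
        have he := Real.add_one_le_exp ((D+1)⁻¹)
        have heq : (D+2)/(D+1) = (D+1)⁻¹ + 1 := by
          field_simp
          ring
        rw [heq]; exact he
      calc ((D+2)/(D+1))^(Δ+1) ≤ (Real.exp ((D+1)⁻¹))^(Δ+1) :=
            pow_le_pow_left₀ (by positivity) h1 _
        _ = Real.exp (((Δ+1 : ℕ) : ℝ) * (D+1)⁻¹) := (Real.exp_nat_mul _ _).symm
        _ = Real.exp 1 := by
            congr 1
            rw [hD]
            push_cast
            field_simp
    have key2 : (D+2)^(Δ+1) ≤ Real.exp 1 * (D+1)^(Δ+1) := by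
      have h := key
      rw [div_pow, div_le_iff₀ (by positivity)] at h
      linarith
    have e1 : x * (1-x)^Δ = (D+1)^Δ / (D+2)^(Δ+1) := by
      rw [h1mx, hxdef, div_pow, pow_succ]
      field_simp
    rw [e1, le_div_iff₀ (by positivity)]
    calc (2:ℝ)^(1-(s:ℝ)) * (D+2)^(Δ+1)
        ≤ (2:ℝ)^(1-(s:ℝ)) * (Real.exp 1 * (D+1)^(Δ+1)) :=
          mul_le_mul_of_nonneg_left key2 hppos.le
      _ = (Real.exp 1 * (2:ℝ)^(1-(s:ℝ)) * (D+1)) * (D+1)^Δ := by rw [pow_succ]; ring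
      _ ≤ 1 * (D+1)^Δ := mul_le_mul_of_nonneg_right hLLL.le (by positivity)
      _ = (D+1)^Δ := one_mul _
  have hpos := LLLAux.BB_pos s Δ E hs hsize hdeg x hx0 hx1 hp E Subset.rfl
  obtain ⟨c, hc⟩ := Finset.card_pos.mp hpos
  rw [LLLAux.BB, Finset.mem_filter] at hc
  refine ⟨c, fun f hf => ?_⟩
  have hnm := hc.2 f hf
  rw [LLLAux.monoP] at hnm
  push_neg at hnm
  obtain ⟨⟨a, ha, hat⟩, ⟨b, hb, hbf⟩⟩ := hnm
  refine ⟨⟨b, hb, ?_⟩, ⟨a, ha, ?_⟩⟩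
  · simpa using hbf
  · simpa using hat
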